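/- Let d ≥ 2 and let F : ℝ → ℝ be an increasing homeomorphism with F(x+1) = F(x) + d for all x and F(0) = 0. Suppose F is continuously differentiable, there are constants C > 0, λ > 1 with (Fⁿ)′(x) ≥ Cλⁿ for all x ∈ ℝ and n ≥ 1, and the modulus of continuity ω(t) = sup{|F′(x) − F′(y)| : |x−y| ≤ t} satisfies the Dini condition ∫₀¹ ω(t)/t dt < ∞. Then F is uniformly symmetric: there is M ≥ 1 such that (F⁻ⁿ(x+t) − F⁻ⁿ(x))/(F⁻ⁿ(x) − F⁻ⁿ(x−t)) ∈ [M⁻¹, M] for all x ∈ ℝ, t > 0, n ≥ 1, and for every η > 0 there is δ > 0 such that this ratio lies in [(1+η)⁻¹, 1+η] for all x ∈ ℝ, all 0 < t ≤ δ and all n ≥ 1. -/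

import Mathlib

open Filter MeasureTheory Set

/-- `Finv F n` is the inverse of the `n`-th iterate `F^[n]`. -/
noncomputable def Finv (F : ℝ → ℝ) (n : ℕ) : ℝ → ℝ := Function.invFun (F^[n])

/-- The modulus of continuity `ω(t) = sup {|F' x - F' y| : |x - y| ≤ t}`. -/
noncomputable def modCont (F' : ℝ → ℝ) (t : ℝ) : ℝ :=
  sSup {a : ℝ | ∃ x y : ℝ, |x - y| ≤ t ∧ a = |F' x - F' y|}


section aux

variable {F F' : ℝ → ℝ} {C lam B : ℝ} {d : ℕ}

lemma fprime_lb (hderiv : ∀ x : ℝ, HasDerivAt F (F' x) x)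
    (hexp : ∀ (n : ℕ) (x : ℝ), 1 ≤ n → C * lam ^ n ≤ deriv (F^[n]) x) (x : ℝ) :
    C * lam ≤ F' x := by
  have h := hexp 1 x le_rfl
  rw [Function.iterate_one, (hderiv x).deriv] at h
  simpa using h

lemma fprime_bound (hdeg : ∀ x : ℝ, F (x + 1) = F x + d)
    (hderiv : ∀ x : ℝ, HasDerivAt F (F' x) x) (hcont : Continuous F') :
    ∃ B : ℝ, ∀ x, F' x ≤ B := by
  have hper : Function.Periodic F' 1 := by
    intro x
    have h1 : HasDerivAt (fun y => F (y + 1)) (F' (x + 1) * 1) x :=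
      (hderiv (x + 1)).comp x ((hasDerivAt_id x).add_const 1)
    have h2 : HasDerivAt (fun y => F (y + 1)) (F' x) x := by
      have he : (fun y : ℝ => F (y + 1)) = fun y => F y + d := funext hdeg
      rw [he]; exact (hderiv x).add_const _
    simpa using h1.unique h2
  obtain ⟨x₀, hx₀, hmax⟩ := isCompact_Icc.exists_isMaxOn
    (⟨0, by norm_num⟩ : (Set.Icc (0:ℝ) 1).Nonempty) hcont.continuousOn
  refine ⟨F' x₀, fun x => ?_⟩
  obtain ⟨y, hy, hxy⟩ := hper.exists_mem_Ico₀ one_pos x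
  rw [hxy]
  exact isMaxOn_iff.mp hmax y (Set.Ico_subset_Icc_self hy)

lemma omega_bddAbove (hB : ∀ x, |F' x| ≤ B) (t : ℝ) :
    BddAbove {a : ℝ | ∃ x y : ℝ, |x - y| ≤ t ∧ a = |F' x - F' y|} := by
  refine ⟨2 * B, ?_⟩
  rintro a ⟨x, y, -, rfl⟩
  calc |F' x - F' y| ≤ |F' x| + |F' y| := abs_sub _ _
    _ ≤ B + B := add_le_add (hB x) (hB y)
    _ = 2 * B := by ring

lemma abs_le_omega (hB : ∀ x, |F' x| ≤ B) {x y t : ℝ} (h : |x - y| ≤ t) :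
    |F' x - F' y| ≤ modCont F' t :=
  le_csSup (omega_bddAbove hB t) ⟨x, y, h, rfl⟩

lemma omega_nonneg (hB : ∀ x, |F' x| ≤ B) {t : ℝ} (ht : 0 ≤ t) : 0 ≤ modCont F' t :=
  le_trans (abs_nonneg _)
    (abs_le_omega hB (x := 0) (y := 0) (by simpa using ht))

lemma omega_mono (hB : ∀ x, |F' x| ≤ B) {t t' : ℝ} (ht : 0 ≤ t) (h : t ≤ t') :
    modCont F' t ≤ modCont F' t' := by
  apply csSup_le_csSup (omega_bddAbove hB t')
  · exact ⟨|F' 0 - F' 0|, 0, 0, by simpa using ht, rfl⟩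
  · rintro a ⟨x, y, hxy, rfl⟩
    exact ⟨x, y, hxy.trans h, rfl⟩

lemma omega_le_two_B (hB : ∀ x, |F' x| ≤ B) {t : ℝ} (ht : 0 ≤ t) :
    modCont F' t ≤ 2 * B := by
  refine csSup_le ⟨|F' 0 - F' 0|, 0, 0, by simpa using ht, rfl⟩ ?_
  rintro a ⟨x, y, -, rfl⟩
  calc |F' x - F' y| ≤ |F' x| + |F' y| := abs_sub _ _
    _ ≤ B + B := add_le_add (hB x) (hB y)
    _ = 2 * B := by ring

lemma iterate_hasDerivAt (hderiv : ∀ x : ℝ, HasDerivAt F (F' x) x) :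
    ∀ (n : ℕ) (x : ℝ), HasDerivAt (F^[n]) (∏ i ∈ Finset.range n, F' (F^[i] x)) x := by
  intro n
  induction n with
  | zero => intro x; simpa using hasDerivAt_id x
  | succ n ih =>
    intro x
    rw [Function.iterate_succ']
    have h := (hderiv (F^[n] x)).comp x (ih x)
    rw [Finset.prod_range_succ, mul_comm]; exact h

lemma prod_lb (hderiv : ∀ x : ℝ, HasDerivAt F (F' x) x)
    (hexp : ∀ (n : ℕ) (x : ℝ), 1 ≤ n → C * lam ^ n ≤ deriv (F^[n]) x)
    {n : ℕ} (hn : 1 ≤ n) (x : ℝ) :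
    C * lam ^ n ≤ ∏ i ∈ Finset.range n, F' (F^[i] x) := by
  rw [← (iterate_hasDerivAt hderiv n x).deriv]
  exact hexp n x hn

lemma iterate_expand (hderiv : ∀ x : ℝ, HasDerivAt F (F' x) x)
    (hexp : ∀ (n : ℕ) (x : ℝ), 1 ≤ n → C * lam ^ n ≤ deriv (F^[n]) x)
    {n : ℕ} (hn : 1 ≤ n) {a b : ℝ} (hab : a ≤ b) :
    C * lam ^ n * (b - a) ≤ F^[n] b - F^[n] a := by
  rcases eq_or_lt_of_le hab with rfl | hab'
  · simp
  have hc : ContinuousOn (F^[n]) (Set.Icc a b) :=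
    (continuous_iff_continuousAt.2 fun x =>
      (iterate_hasDerivAt hderiv n x).continuousAt).continuousOn
  obtain ⟨ξ, -, hξ⟩ := exists_hasDerivAt_eq_slope (F^[n]) _ hab' hc
    (fun x _ => iterate_hasDerivAt hderiv n x)
  have h1 : C * lam ^ n ≤ (F^[n] b - F^[n] a) / (b - a) := hξ ▸ prod_lb hderiv hexp hn ξ
  have hba : 0 < b - a := sub_pos.2 hab'
  calc C * lam ^ n * (b - a) ≤ ((F^[n] b - F^[n] a) / (b - a)) * (b - a) :=
        mul_le_mul_of_nonneg_right h1 hba.le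
    _ = F^[n] b - F^[n] a := by field_simp

end aux
section aux2

variable {F F' : ℝ → ℝ} {C lam B : ℝ} {d : ℕ}

lemma finv_left (hbij : Function.Bijective F) (n : ℕ) (x : ℝ) :
    Finv F n (F^[n] x) = x :=
  Function.leftInverse_invFun (hbij.iterate n).1 x

lemma finv_right (hbij : Function.Bijective F) (n : ℕ) (y : ℝ) :
    F^[n] (Finv F n y) = y :=
  Function.rightInverse_invFun (hbij.iterate n).2 y

lemma finv_lt (hmono : StrictMono F) (hbij : Function.Bijective F) {n : ℕ} {a b : ℝ}
    (h : a < b) : Finv F n a < Finv F n b := by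
  have h2 : F^[n] (Finv F n a) < F^[n] (Finv F n b) := by
    rw [finv_right hbij, finv_right hbij]; exact h
  exact (hmono.iterate n).lt_iff_lt.mp h2

lemma finv_le (hmono : StrictMono F) (hbij : Function.Bijective F) {n : ℕ} {a b : ℝ}
    (h : a ≤ b) : Finv F n a ≤ Finv F n b := by
  rcases eq_or_lt_of_le h with rfl | h'
  · exact le_refl _
  · exact (finv_lt hmono hbij h').le

lemma map_add_nat (hdeg : ∀ x : ℝ, F (x + 1) = F x + d) :
    ∀ (q : ℕ) (x : ℝ), F (x + q) = F x + d * q := by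
  intro q
  induction q with
  | zero => intro x; simp
  | succ q ih =>
    intro x
    have : x + (q + 1 : ℕ) = (x + q) + 1 := by push_cast; ring
    rw [this, hdeg, ih]
    push_cast; ring

lemma iterate_add_nat (hdeg : ∀ x : ℝ, F (x + 1) = F x + d) :
    ∀ (n q : ℕ) (x : ℝ), F^[n] (x + q) = F^[n] x + ((d ^ n * q : ℕ) : ℝ) := by
  intro n
  induction n with
  | zero => intro q x; simp
  | succ n ih =>
    intro q x
    rw [Function.iterate_succ_apply', Function.iterate_succ_apply', ih, map_add_nat hdeg]
    push_cast; ring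

lemma finv_add_nat (hbij : Function.Bijective F) (hdeg : ∀ x : ℝ, F (x + 1) = F x + d)
    (n q : ℕ) (y : ℝ) :
    Finv F n (y + ((d ^ n * q : ℕ) : ℝ)) = Finv F n y + q := by
  have h := iterate_add_nat hdeg n q (Finv F n y)
  rw [finv_right hbij] at h
  rw [← h, finv_left hbij]

lemma finv_comp (hbij : Function.Bijective F) (m k : ℕ) (y : ℝ) :
    Finv F (m + k) y = Finv F k (Finv F m y) := by
  have h2 : F^[m + k] (Finv F k (Finv F m y)) = y := by
    rw [Function.iterate_add_apply, finv_right hbij, finv_right hbij]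
  conv_lhs => rw [← h2]
  rw [finv_left hbij]

lemma finv_mvt (hmono : StrictMono F) (hbij : Function.Bijective F)
    (hderiv : ∀ x : ℝ, HasDerivAt F (F' x) x) {k : ℕ} {v w : ℝ} (hvw : v < w) :
    ∃ ξ ∈ Set.Ioo (Finv F k v) (Finv F k w),
      (∏ i ∈ Finset.range k, F' (F^[i] ξ)) * (Finv F k w - Finv F k v) = w - v := by
  have hbc : Finv F k v < Finv F k w := finv_lt hmono hbij hvw
  have hc : ContinuousOn (F^[k]) (Set.Icc (Finv F k v) (Finv F k w)) :=
    (continuous_iff_continuousAt.2 fun x =>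
      (iterate_hasDerivAt hderiv k x).continuousAt).continuousOn
  obtain ⟨ξ, hξm, hξ⟩ := exists_hasDerivAt_eq_slope (F^[k]) _ hbc hc
    (fun x _ => iterate_hasDerivAt hderiv k x)
  refine ⟨ξ, hξm, ?_⟩
  rw [hξ, finv_right hbij, finv_right hbij]
  have : Finv F k w - Finv F k v ≠ 0 := sub_ne_zero.2 hbc.ne'
  field_simp

lemma prod_ratio (hmono : StrictMono F)
    (hderiv : ∀ x : ℝ, HasDerivAt F (F' x) x)
    (hC : 0 < C) (hlam : 1 < lam)
    (hexp : ∀ (n : ℕ) (x : ℝ), 1 ≤ n → C * lam ^ n ≤ deriv (F^[n]) x)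
    (hB : ∀ x, |F' x| ≤ B)
    {k : ℕ} {a c ξ ζ s : ℝ}
    (hξ : ξ ∈ Set.Icc a c) (hζ : ζ ∈ Set.Icc a c) (hs : F^[k] c - F^[k] a ≤ s) :
    (∏ i ∈ Finset.range k, F' (F^[i] ζ)) ≤ (∏ i ∈ Finset.range k, F' (F^[i] ξ)) *
      Real.exp ((∑ i ∈ Finset.range k, modCont F' (s / C * lam⁻¹ ^ (i + 1))) / (C * lam)) := by
  have hlam0 : (0:ℝ) < lam := lt_trans one_pos hlam
  have hm : 0 < C * lam := mul_pos hC hlam0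
  have hf' : ∀ x, C * lam ≤ F' x := fprime_lb hderiv hexp
  have hfpos : ∀ x, 0 < F' x := fun x => lt_of_lt_of_le hm (hf' x)
  have hac : a ≤ c := le_trans hξ.1 hξ.2
  have hs0 : 0 ≤ s := by
    have := (hmono.iterate k).monotone (hac)
    linarith [hs, sub_nonneg.2 this]
  have key : ∀ i ∈ Finset.range k,
      F' (F^[i] ζ) ≤ F' (F^[i] ξ) *
        (1 + modCont F' (s / C * lam⁻¹ ^ (k - i)) / (C * lam)) := by
    intro i hi
    have hik : i < k := Finset.mem_range.mp hi
    have h1 : 1 ≤ k - i := by omega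
    have hmonoI := (hmono.iterate i).monotone
    have hlen : F^[i] c - F^[i] a ≤ s / C * lam⁻¹ ^ (k - i) := by
      have hexp2 := iterate_expand hderiv hexp h1 (hmonoI hac)
      rw [← Function.iterate_add_apply, ← Function.iterate_add_apply,
        Nat.sub_add_cancel hik.le] at hexp2
      have hCl : 0 < C * lam ^ (k - i) := mul_pos hC (pow_pos hlam0 _)
      have h2 : F^[i] c - F^[i] a ≤ s / (C * lam ^ (k - i)) := by
        rw [le_div_iff₀ hCl]; nlinarith [hexp2, hs]
      calc F^[i] c - F^[i] a ≤ s / (C * lam ^ (k - i)) := h2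
        _ = s / C * lam⁻¹ ^ (k - i) := by
          rw [← div_div, div_eq_mul_inv (s / C), inv_pow]
    have hdiff : |F^[i] ζ - F^[i] ξ| ≤ s / C * lam⁻¹ ^ (k - i) := by
      refine le_trans ?_ hlen
      rw [abs_sub_le_iff]
      constructor
      · linarith [hmonoI hζ.2, hmonoI hξ.1]
      · linarith [hmonoI hξ.2, hmonoI hζ.1]
    have hω := abs_le_omega hB hdiff
    have hω0 : 0 ≤ modCont F' (s / C * lam⁻¹ ^ (k - i)) :=
      le_trans (abs_nonneg _) hω
    have hfx := hf' (F^[i] ξ)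
    have h3 : F' (F^[i] ζ) - F' (F^[i] ξ) ≤ modCont F' (s / C * lam⁻¹ ^ (k - i)) :=
      le_of_abs_le hω
    set ω := modCont F' (s / C * lam⁻¹ ^ (k - i)) with hωdef
    have h4 : (ω / (C * lam)) * (C * lam) ≤ (ω / (C * lam)) * F' (F^[i] ξ) :=
      mul_le_mul_of_nonneg_left hfx (div_nonneg hω0 hm.le)
    rw [div_mul_cancel₀ _ hm.ne'] at h4
    nlinarith [h4]
  calc (∏ i ∈ Finset.range k, F' (F^[i] ζ))
      ≤ ∏ i ∈ Finset.range k, (F' (F^[i] ξ) *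
          (1 + modCont F' (s / C * lam⁻¹ ^ (k - i)) / (C * lam))) :=
        Finset.prod_le_prod (fun i _ => (hfpos _).le) key
    _ = (∏ i ∈ Finset.range k, F' (F^[i] ξ)) *
        ∏ i ∈ Finset.range k, (1 + modCont F' (s / C * lam⁻¹ ^ (k - i)) / (C * lam)) :=
        Finset.prod_mul_distrib
    _ ≤ (∏ i ∈ Finset.range k, F' (F^[i] ξ)) *
        ∏ i ∈ Finset.range k, Real.exp (modCont F' (s / C * lam⁻¹ ^ (k - i)) / (C * lam)) := by
        apply mul_le_mul_of_nonneg_left _ (Finset.prod_nonneg fun i _ => (hfpos _).le)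
        apply Finset.prod_le_prod
        · intro i _
          have hω0 : 0 ≤ modCont F' (s / C * lam⁻¹ ^ (k - i)) :=
            omega_nonneg hB (by positivity)
          positivity
        · intro i _
          rw [add_comm]
          exact Real.add_one_le_exp _
    _ = (∏ i ∈ Finset.range k, F' (F^[i] ξ)) *
        Real.exp ((∑ i ∈ Finset.range k, modCont F' (s / C * lam⁻¹ ^ (i + 1))) / (C * lam)) := by
        have hre : (∑ i ∈ Finset.range k, modCont F' (s / C * lam⁻¹ ^ (k - i)))
            = ∑ i ∈ Finset.range k, modCont F' (s / C * lam⁻¹ ^ (i + 1)) := by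
          rw [← Finset.sum_range_reflect (fun i => modCont F' (s / C * lam⁻¹ ^ (i + 1))) k]
          refine Finset.sum_congr rfl fun i hi => ?_
          have hik : i < k := Finset.mem_range.mp hi
          rw [show k - i = (k - 1 - i) + 1 from by omega]
        rw [← Real.exp_sum, ← Finset.sum_div, hre]

end aux2
section aux3

variable {F F' : ℝ → ℝ} {C lam B : ℝ} {d : ℕ}

lemma core_est (hmono : StrictMono F) (hbij : Function.Bijective F)
    (hderiv : ∀ x : ℝ, HasDerivAt F (F' x) x)
    (hC : 0 < C) (hlam : 1 < lam)
    (hexp : ∀ (n : ℕ) (x : ℝ), 1 ≤ n → C * lam ^ n ≤ deriv (F^[n]) x)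
    (hB : ∀ x, |F' x| ≤ B)
    {k : ℕ} {u p q s : ℝ} (hp : 0 < p) (hq : 0 < q) (hpq : p + q ≤ s) :
    (Finv F k (u + p) - Finv F k u ≤ (Finv F k u - Finv F k (u - q)) *
      ((p / q) * Real.exp ((∑ i ∈ Finset.range k,
        modCont F' (s / C * lam⁻¹ ^ (i + 1))) / (C * lam)))) ∧
    (Finv F k u - Finv F k (u - q) ≤ (Finv F k (u + p) - Finv F k u) *
      ((q / p) * Real.exp ((∑ i ∈ Finset.range k,
        modCont F' (s / C * lam⁻¹ ^ (i + 1))) / (C * lam)))) := by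
  have hlam0 : (0:ℝ) < lam := lt_trans one_pos hlam
  have hm : 0 < C * lam := mul_pos hC hlam0
  have hf' : ∀ x, C * lam ≤ F' x := fprime_lb hderiv hexp
  have hfpos : ∀ x, 0 < F' x := fun x => lt_of_lt_of_le hm (hf' x)
  set E := Real.exp ((∑ i ∈ Finset.range k,
    modCont F' (s / C * lam⁻¹ ^ (i + 1))) / (C * lam)) with hE
  have hEpos : 0 < E := Real.exp_pos _
  obtain ⟨ξ, hξm, hξ⟩ := finv_mvt hmono hbij hderiv (k := k)
    (show u < u + p by linarith)
  obtain ⟨ζ, hζm, hζ⟩ := finv_mvt hmono hbij hderiv (k := k)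
    (show u - q < u by linarith)
  set a := Finv F k (u - q)
  set b := Finv F k u
  set c := Finv F k (u + p)
  have hab : a < b := finv_lt hmono hbij (by linarith)
  have hbc : b < c := finv_lt hmono hbij (by linarith)
  have hξI : ξ ∈ Set.Icc a c := ⟨le_trans hab.le hξm.1.le, hξm.2.le⟩
  have hζI : ζ ∈ Set.Icc a c := ⟨hζm.1.le, le_trans hζm.2.le hbc.le⟩
  have hsk : F^[k] c - F^[k] a ≤ s := by
    rw [finv_right hbij, finv_right hbij]; linarith
  set Pξ := ∏ i ∈ Finset.range k, F' (F^[i] ξ) with hPξ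
  set Pζ := ∏ i ∈ Finset.range k, F' (F^[i] ζ) with hPζ
  have hPξ0 : 0 < Pξ := Finset.prod_pos fun i _ => hfpos _
  have hPζ0 : 0 < Pζ := Finset.prod_pos fun i _ => hfpos _
  have key1 : Pζ ≤ Pξ * E := prod_ratio hmono hderiv hC hlam hexp hB hξI hζI hsk
  have key2 : Pξ ≤ Pζ * E := prod_ratio hmono hderiv hC hlam hexp hB hζI hξI hsk
  -- hξ : Pξ * (c - b) = (u + p) - u,  hζ : Pζ * (b - a) = u - (u - q)
  have hcb : c - b = p / Pξ := by
    field_simp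
    linarith [hξ]
  have hba : b - a = q / Pζ := by
    field_simp
    linarith [hζ]
  constructor
  · rw [hcb, hba]
    rw [div_le_iff₀ hPξ0]
    have h1 : q / Pζ * (p / q * E) * Pξ = p * (E * Pξ) / Pζ := by
      field_simp
    rw [h1, le_div_iff₀ hPζ0]
    nlinarith [key1, hp.le]
  · rw [hcb, hba]
    rw [div_le_iff₀ hPζ0]
    have h1 : p / Pξ * (q / p * E) * Pζ = q * (E * Pζ) / Pξ := by
      field_simp
    rw [h1, le_div_iff₀ hPξ0]
    nlinarith [key2, hq.le]

/-- integral monotonicity helper -/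
lemma int_mono (hB : ∀ x, |F' x| ≤ B)
    (hDini : MeasureTheory.IntegrableOn (fun t => modCont F' t / t) (Set.Ioc 0 1))
    {s t : Set ℝ} (hst : s ⊆ t) (ht1 : t ⊆ Set.Ioc 0 1) (htm : MeasurableSet t) :
    ∫ u in s, modCont F' u / u ≤ ∫ u in t, modCont F' u / u := by
  refine setIntegral_mono_set (hDini.mono_set ht1) ?_ hst.eventuallyLE
  refine ae_restrict_of_forall_mem htm fun u hu => ?_
  exact div_nonneg (omega_nonneg hB (ht1 hu).1.le) (ht1 hu).1.le

lemma int_nonneg (hB : ∀ x, |F' x| ≤ B) {s : Set ℝ} (hs : MeasurableSet s)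
    (hs1 : s ⊆ Set.Ioc 0 1) :
    0 ≤ ∫ u in s, modCont F' u / u := by
  refine setIntegral_nonneg hs fun u hu => ?_
  exact div_nonneg (omega_nonneg hB (hs1 hu).1.le) (hs1 hu).1.le

lemma step_int (hB : ∀ x, |F' x| ≤ B)
    (hDini : MeasureTheory.IntegrableOn (fun t => modCont F' t / t) (Set.Ioc 0 1))
    {a b : ℝ} (ha : 0 < a) (hab : a ≤ b) (hb1 : b ≤ 1) :
    modCont F' a * Real.log (b / a) ≤ ∫ u in Set.Ioc a b, modCont F' u / u := by
  have hb0 : 0 < b := lt_of_lt_of_le ha hab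
  have hint : MeasureTheory.IntegrableOn (fun u => modCont F' u / u) (Set.Ioc a b) :=
    hDini.mono_set (Set.Ioc_subset_Ioc ha.le hb1)
  have hcont2 : ContinuousOn (fun u : ℝ => modCont F' a * u⁻¹) (Set.Icc a b) := by
    apply ContinuousOn.mul continuousOn_const
    exact ContinuousOn.inv₀ continuousOn_id fun x hx => ne_of_gt (lt_of_lt_of_le ha hx.1)
  have hint2 : MeasureTheory.IntegrableOn (fun u : ℝ => modCont F' a * u⁻¹) (Set.Ioc a b) :=
    (hcont2.integrableOn_Icc).mono_set Set.Ioc_subset_Icc_self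
  have heq : ∫ u in Set.Ioc a b, modCont F' a * u⁻¹ = modCont F' a * Real.log (b / a) := by
    rw [MeasureTheory.integral_const_mul]
    rw [← intervalIntegral.integral_of_le hab, integral_inv_of_pos ha hb0]
  rw [← heq]
  refine setIntegral_mono_on hint2 hint measurableSet_Ioc fun u hu => ?_
  have hu0 : 0 < u := lt_trans ha hu.1
  rw [div_eq_mul_inv]
  exact mul_le_mul_of_nonneg_right (omega_mono hB ha.le hu.1.le) (inv_nonneg.2 hu0.le)

end aux3
section aux4

variable {F F' : ℝ → ℝ} {C lam B : ℝ} {d : ℕ}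

lemma sum1 (hB : ∀ x, |F' x| ≤ B) (hlam : 1 < lam)
    (hDini : MeasureTheory.IntegrableOn (fun t => modCont F' t / t) (Set.Ioc 0 1))
    {r : ℝ} (hr : 0 < r) (hr1 : r ≤ 1) (k : ℕ) :
    ∑ i ∈ Finset.range k, modCont F' (r * lam⁻¹ ^ (i + 1)) ≤
      modCont F' r + (Real.log lam)⁻¹ * ∫ u in Set.Ioc 0 r, modCont F' u / u := by
  have hlam0 : (0:ℝ) < lam := lt_trans one_pos hlam
  have hL : 0 < Real.log lam := Real.log_pos hlam
  have hil : 0 < lam⁻¹ := inv_pos.2 hlam0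
  have hil1 : lam⁻¹ < 1 := inv_lt_one_of_one_lt₀ hlam
  have hrpow : ∀ j : ℕ, 0 < r * lam⁻¹ ^ j := fun j => mul_pos hr (pow_pos hil j)
  have hrpow1 : ∀ j : ℕ, r * lam⁻¹ ^ j ≤ 1 := by
    intro j
    calc r * lam⁻¹ ^ j ≤ 1 * 1 := by
          apply mul_le_mul hr1 (pow_le_one₀ hil.le hil1.le) (pow_pos hil j).le one_pos.le
      _ = 1 := by ring
  have hdec : ∀ j : ℕ, r * lam⁻¹ ^ (j + 1) ≤ r * lam⁻¹ ^ j := by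
    intro j
    apply mul_le_mul_of_nonneg_left _ hr.le
    exact pow_le_pow_of_le_one hil.le hil1.le (by omega)
  -- key claim by induction
  have claim : ∀ k : ℕ,
      (∑ i ∈ Finset.range k, modCont F' (r * lam⁻¹ ^ (i + 2))) * Real.log lam ≤
        ∫ u in Set.Ioc (r * lam⁻¹ ^ (k + 1)) (r * lam⁻¹), modCont F' u / u := by
    intro k
    induction k with
    | zero =>
      simp only [Finset.range_zero, Finset.sum_empty, zero_mul]
      rw [show (0:ℕ) + 1 = 1 from rfl]
      simp [pow_one]
    | succ k ih =>
      rw [Finset.sum_range_succ, add_mul]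
      have hsplit : Set.Ioc (r * lam⁻¹ ^ (k + 2)) (r * lam⁻¹) =
          Set.Ioc (r * lam⁻¹ ^ (k + 2)) (r * lam⁻¹ ^ (k + 1)) ∪
          Set.Ioc (r * lam⁻¹ ^ (k + 1)) (r * lam⁻¹) := by
        rw [Set.Ioc_union_Ioc_eq_Ioc (hdec (k+1)) ?_]
        calc r * lam⁻¹ ^ (k + 1) ≤ r * lam⁻¹ ^ 1 :=
              mul_le_mul_of_nonneg_left
                (pow_le_pow_of_le_one hil.le hil1.le (by omega)) hr.le
          _ = r * lam⁻¹ := by rw [pow_one]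
      have hsub : ∀ (x y : ℝ), 0 < x → y ≤ 1 → Set.Ioc x y ⊆ Set.Ioc 0 1 :=
        fun x y hx hy => Set.Ioc_subset_Ioc hx.le hy
      have hdisj : Disjoint (Set.Ioc (r * lam⁻¹ ^ (k + 2)) (r * lam⁻¹ ^ (k + 1)))
          (Set.Ioc (r * lam⁻¹ ^ (k + 1)) (r * lam⁻¹)) := by
        apply Set.disjoint_left.2
        rintro x hx1 hx2
        exact absurd hx1.2 (not_le.2 hx2.1)
      have hi1 : MeasureTheory.IntegrableOn (fun u => modCont F' u / u)
          (Set.Ioc (r * lam⁻¹ ^ (k + 2)) (r * lam⁻¹ ^ (k + 1))) :=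
        hDini.mono_set (hsub _ _ (hrpow _) (hrpow1 _))
      have hi2 : MeasureTheory.IntegrableOn (fun u => modCont F' u / u)
          (Set.Ioc (r * lam⁻¹ ^ (k + 1)) (r * lam⁻¹)) := by
        apply hDini.mono_set (hsub _ _ (hrpow _) ?_)
        rw [← pow_one lam⁻¹]
        exact hrpow1 1
      rw [hsplit, setIntegral_union hdisj measurableSet_Ioc hi1 hi2]
      have hnew : modCont F' (r * lam⁻¹ ^ (k + 2)) * Real.log lam ≤
          ∫ u in Set.Ioc (r * lam⁻¹ ^ (k + 2)) (r * lam⁻¹ ^ (k + 1)), modCont F' u / u := by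
        have hlog : Real.log ((r * lam⁻¹ ^ (k + 1)) / (r * lam⁻¹ ^ (k + 2))) = Real.log lam := by
          have hquot : (r * lam⁻¹ ^ (k + 1)) / (r * lam⁻¹ ^ (k + 2)) = lam := by
            rw [pow_succ]
            field_simp
            rw [one_div, pow_add, ← mul_assoc, mul_comm (lam ^ 2), mul_assoc, ← mul_pow, mul_inv_cancel₀ hlam0.ne', one_pow, mul_one]
          rw [hquot]
        have h5 := step_int hB hDini (hrpow (k + 2)) (hdec (k + 1)) (hrpow1 (k + 1))
        rw [hlog] at h5
        exact h5
      calc (∑ i ∈ Finset.range k, modCont F' (r * lam⁻¹ ^ (i + 2))) * Real.log lam +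
            modCont F' (r * lam⁻¹ ^ (k + 2)) * Real.log lam
          ≤ (∫ u in Set.Ioc (r * lam⁻¹ ^ (k + 1)) (r * lam⁻¹), modCont F' u / u) +
            (∫ u in Set.Ioc (r * lam⁻¹ ^ (k + 2)) (r * lam⁻¹ ^ (k + 1)), modCont F' u / u) := by
            exact add_le_add ih hnew
        _ = _ := by ring
  -- now conclude
  rcases k with _ | k
  · simp only [Finset.range_zero, Finset.sum_empty]
    have h1 : 0 ≤ modCont F' r := omega_nonneg hB hr.le
    have h2 : 0 ≤ ∫ u in Set.Ioc 0 r, modCont F' u / u :=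
      int_nonneg hB measurableSet_Ioc (Set.Ioc_subset_Ioc le_rfl hr1)
    positivity
  · rw [Finset.sum_range_succ']
    have hfirst : modCont F' (r * lam⁻¹ ^ (0 + 1)) ≤ modCont F' r := by
      apply omega_mono hB (hrpow 1).le
      nlinarith [hil1, hr]
    have hrest : ∑ i ∈ Finset.range k, modCont F' (r * lam⁻¹ ^ (i + 1 + 1)) ≤
        (Real.log lam)⁻¹ * ∫ u in Set.Ioc 0 r, modCont F' u / u := by
      have h := claim k
      have hmono3 : (∫ u in Set.Ioc (r * lam⁻¹ ^ (k + 1)) (r * lam⁻¹), modCont F' u / u) ≤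
          ∫ u in Set.Ioc 0 r, modCont F' u / u := by
        apply int_mono hB hDini _ (Set.Ioc_subset_Ioc le_rfl hr1) measurableSet_Ioc
        apply Set.Ioc_subset_Ioc (hrpow (k+1)).le
        calc r * lam⁻¹ ≤ r * 1 := by nlinarith [hil1, hr]
          _ = r := by ring
      have h2 : (∑ i ∈ Finset.range k, modCont F' (r * lam⁻¹ ^ (i + 2))) * Real.log lam ≤
          ∫ u in Set.Ioc 0 r, modCont F' u / u := le_trans h hmono3
      rw [← le_div_iff₀ hL] at h2
      calc ∑ i ∈ Finset.range k, modCont F' (r * lam⁻¹ ^ (i + 1 + 1))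
          = ∑ i ∈ Finset.range k, modCont F' (r * lam⁻¹ ^ (i + 2)) := by
            apply Finset.sum_congr rfl; intro i _; norm_num
        _ ≤ (∫ u in Set.Ioc 0 r, modCont F' u / u) / Real.log lam := h2
        _ = (Real.log lam)⁻¹ * ∫ u in Set.Ioc 0 r, modCont F' u / u := by
            rw [div_eq_inv_mul]
    linarith [hfirst, hrest]

end aux4
section aux5

variable {F F' : ℝ → ℝ} {C lam B : ℝ} {d : ℕ}

lemma sum2 (hB : ∀ x, |F' x| ≤ B) (hlam : 1 < lam)
    (hDini : MeasureTheory.IntegrableOn (fun t => modCont F' t / t) (Set.Ioc 0 1))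
    {r : ℝ} (hr : 0 < r) {J : ℕ} (hJ : r ≤ lam ^ J) (k : ℕ) :
    ∑ i ∈ Finset.range k, modCont F' (r * lam⁻¹ ^ (i + 1)) ≤
      2 * B * J + (modCont F' 1 +
        (Real.log lam)⁻¹ * ∫ u in Set.Ioc 0 1, modCont F' u / u) := by
  have hlam0 : (0:ℝ) < lam := lt_trans one_pos hlam
  have hil : 0 < lam⁻¹ := inv_pos.2 hlam0
  have hB0 : 0 ≤ B := le_trans (abs_nonneg _) (hB 0)
  have hΨ1 : 0 ≤ modCont F' 1 + (Real.log lam)⁻¹ * ∫ u in Set.Ioc 0 1, modCont F' u / u := by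
    have h1 : 0 ≤ modCont F' 1 := omega_nonneg hB one_pos.le
    have h2 : 0 ≤ ∫ u in Set.Ioc 0 1, modCont F' u / u :=
      int_nonneg hB measurableSet_Ioc (fun x h => h)
    have h3 : 0 ≤ (Real.log lam)⁻¹ := inv_nonneg.2 (Real.log_pos hlam).le
    positivity
  have hterm2B : ∀ i : ℕ, modCont F' (r * lam⁻¹ ^ (i + 1)) ≤ 2 * B :=
    fun i => omega_le_two_B hB (by positivity)
  rcases le_or_gt k J with hkJ | hkJ
  · calc ∑ i ∈ Finset.range k, modCont F' (r * lam⁻¹ ^ (i + 1))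
        ≤ ∑ _i ∈ Finset.range k, 2 * B := Finset.sum_le_sum fun i _ => hterm2B i
      _ = k * (2 * B) := by rw [Finset.sum_const, Finset.card_range]; ring
      _ ≤ J * (2 * B) := by
          apply mul_le_mul_of_nonneg_right _ (by positivity)
          exact_mod_cast hkJ
      _ ≤ 2 * B * J + _ := by linarith [hΨ1]
  · have hsplit : ∑ i ∈ Finset.range k, modCont F' (r * lam⁻¹ ^ (i + 1)) =
        (∑ i ∈ Finset.range J, modCont F' (r * lam⁻¹ ^ (i + 1))) +
        ∑ i ∈ Finset.Ico J k, modCont F' (r * lam⁻¹ ^ (i + 1)) := by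
      rw [Finset.range_eq_Ico, Finset.range_eq_Ico]
      exact (Finset.sum_Ico_consecutive (fun i => modCont F' (r * lam⁻¹ ^ (i + 1))) (Nat.zero_le J) hkJ.le).symm
    rw [hsplit]
    have h1 : ∑ i ∈ Finset.range J, modCont F' (r * lam⁻¹ ^ (i + 1)) ≤ 2 * B * J := by
      calc ∑ i ∈ Finset.range J, modCont F' (r * lam⁻¹ ^ (i + 1))
          ≤ ∑ _i ∈ Finset.range J, 2 * B := Finset.sum_le_sum fun i _ => hterm2B i
        _ = 2 * B * J := by rw [Finset.sum_const, Finset.card_range]; ring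
    have h2 : ∑ i ∈ Finset.Ico J k, modCont F' (r * lam⁻¹ ^ (i + 1)) ≤
        modCont F' 1 + (Real.log lam)⁻¹ * ∫ u in Set.Ioc 0 1, modCont F' u / u := by
      have hb : ∀ i ∈ Finset.Ico J k, modCont F' (r * lam⁻¹ ^ (i + 1)) ≤
          modCont F' (1 * lam⁻¹ ^ (i - J + 1)) := by
        intro i hi
        have hiJ : J ≤ i := (Finset.mem_Ico.mp hi).1
        apply omega_mono hB (by positivity)
        have hpow : r * lam⁻¹ ^ (i + 1) ≤ lam ^ J * lam⁻¹ ^ (i + 1) :=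
          mul_le_mul_of_nonneg_right hJ (by positivity)
        have heq : lam ^ J * lam⁻¹ ^ (i + 1) = 1 * lam⁻¹ ^ (i - J + 1) := by
          rw [show i + 1 = J + (i - J + 1) from by omega, pow_add]
          rw [inv_pow lam J]
          field_simp
        linarith [hpow, heq.le, heq.ge]
      calc ∑ i ∈ Finset.Ico J k, modCont F' (r * lam⁻¹ ^ (i + 1))
          ≤ ∑ i ∈ Finset.Ico J k, modCont F' (1 * lam⁻¹ ^ (i - J + 1)) :=
            Finset.sum_le_sum hb
        _ = ∑ i ∈ Finset.range (k - J), modCont F' (1 * lam⁻¹ ^ (i + 1)) := by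
            rw [Finset.sum_Ico_eq_sum_range]
            apply Finset.sum_congr rfl
            intro i _
            rw [show J + i - J = i from by omega]
        _ ≤ modCont F' 1 + (Real.log lam)⁻¹ * ∫ u in Set.Ioc 0 1, modCont F' u / u :=
            sum1 hB hlam hDini one_pos le_rfl (k - J)
    linarith [h1, h2]

lemma int_small (hB : ∀ x, |F' x| ≤ B)
    (hDini : MeasureTheory.IntegrableOn (fun t => modCont F' t / t) (Set.Ioc 0 1))
    {ε : ℝ} (hε : 0 < ε) :
    ∃ a : ℝ, 0 < a ∧ a ≤ 1 ∧ (∫ u in Set.Ioc 0 a, modCont F' u / u) < ε := by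
  set f : ℝ → ℝ := fun u => modCont F' u / u
  set s : ℕ → Set ℝ := fun i => Set.Ioc (1 / (i + 1) : ℝ) 1 with hs
  have hsm : ∀ i, MeasurableSet (s i) := fun i => measurableSet_Ioc
  have hmonoS : Monotone s := by
    intro i j hij
    apply Set.Ioc_subset_Ioc_left
    apply one_div_le_one_div_of_le (by positivity)
    linarith [(Nat.cast_le (α := ℝ)).2 hij]
  have hunion : (⋃ i, s i) = Set.Ioc 0 1 := by
    ext x
    simp only [Set.mem_iUnion, Set.mem_Ioc, hs]
    constructor
    · rintro ⟨i, hi1, hi2⟩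
      exact ⟨lt_trans (by positivity) hi1, hi2⟩
    · rintro ⟨hx0, hx1⟩
      obtain ⟨i, hi⟩ := exists_nat_one_div_lt hx0
      exact ⟨i, hi, hx1⟩
  have hint : MeasureTheory.IntegrableOn f (⋃ i, s i) := by rw [hunion]; exact hDini
  have htend := MeasureTheory.tendsto_setIntegral_of_monotone hsm hmonoS hint
  rw [hunion] at htend
  rw [Metric.tendsto_atTop] at htend
  obtain ⟨N, hN⟩ := htend ε hε
  have hNN := hN N le_rfl
  set a : ℝ := 1 / (N + 1) with ha
  have ha0 : 0 < a := by positivity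
  have ha1 : a ≤ 1 := by
    rw [ha]
    rw [div_le_one (by positivity)]
    linarith [Nat.cast_nonneg (α := ℝ) N]
  refine ⟨a, ha0, ha1, ?_⟩
  have hadd : (∫ u in Set.Ioc 0 1, f u) =
      (∫ u in Set.Ioc 0 a, f u) + ∫ u in Set.Ioc a 1, f u := by
    rw [← setIntegral_union]
    · rw [Set.Ioc_union_Ioc_eq_Ioc ha0.le ha1]
    · apply Set.disjoint_left.2
      rintro x hx1 hx2
      exact absurd hx1.2 (not_le.2 hx2.1)
    · exact measurableSet_Ioc
    · exact hDini.mono_set (Set.Ioc_subset_Ioc le_rfl ha1)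
    · exact hDini.mono_set (Set.Ioc_subset_Ioc ha0.le le_rfl)
  have hdist := hNN
  rw [Real.dist_eq] at hdist
  have hsN : (∫ u in s N, f u) = ∫ u in Set.Ioc a 1, f u := rfl
  have : (∫ u in Set.Ioc 0 a, f u) = (∫ u in Set.Ioc 0 1, f u) - ∫ u in s N, f u := by
    rw [hadd, hsN]; ring
  rw [this]
  calc (∫ u in Set.Ioc 0 1, f u) - ∫ u in s N, f u
      ≤ |(∫ u in s N, f u) - ∫ u in Set.Ioc 0 1, f u| := by
        rw [abs_sub_comm]; exact le_abs_self _
    _ < ε := hdist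

lemma psi_small (hB : ∀ x, |F' x| ≤ B) (hlam : 1 < lam)
    (hDini : MeasureTheory.IntegrableOn (fun t => modCont F' t / t) (Set.Ioc 0 1))
    {ε : ℝ} (hε : 0 < ε) :
    ∃ r₀ : ℝ, 0 < r₀ ∧ r₀ ≤ 1 ∧ ∀ r : ℝ, 0 < r → r ≤ r₀ →
      modCont F' r + (Real.log lam)⁻¹ * ∫ u in Set.Ioc 0 r, modCont F' u / u ≤ ε := by
  have hL : 0 < Real.log lam := Real.log_pos hlam
  have hL2 : 0 < Real.log 2 := Real.log_pos (by norm_num)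
  set c₀ : ℝ := (Real.log 2)⁻¹ + (Real.log lam)⁻¹ with hc₀
  have hc₀pos : 0 < c₀ := by positivity
  obtain ⟨a, ha0, ha1, haint⟩ := int_small hB hDini (show 0 < ε / c₀ by positivity)
  refine ⟨a / 2, by positivity, by linarith, ?_⟩
  intro r hr hra
  have h2ra : 2 * r ≤ a := by linarith
  have h2r1 : 2 * r ≤ 1 := le_trans h2ra ha1
  -- ω r ≤ (log 2)⁻¹ * ∫_{Ioc 0 2r}
  have hωr : modCont F' r * Real.log 2 ≤ ∫ u in Set.Ioc 0 (2 * r), modCont F' u / u := by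
    have hstep := step_int hB hDini hr (by linarith) h2r1
    have hlog : Real.log ((2 * r) / r) = Real.log 2 := by
      rw [show (2 * r) / r = 2 from by field_simp]
    rw [hlog] at hstep
    calc modCont F' r * Real.log 2 ≤ ∫ u in Set.Ioc r (2 * r), modCont F' u / u := hstep
      _ ≤ ∫ u in Set.Ioc 0 (2 * r), modCont F' u / u := by
          apply int_mono hB hDini (Set.Ioc_subset_Ioc hr.le le_rfl)
            (Set.Ioc_subset_Ioc le_rfl h2r1) measurableSet_Ioc
  have hImono : (∫ u in Set.Ioc 0 r, modCont F' u / u) ≤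
      ∫ u in Set.Ioc 0 (2 * r), modCont F' u / u := by
    apply int_mono hB hDini (Set.Ioc_subset_Ioc le_rfl (by linarith))
      (Set.Ioc_subset_Ioc le_rfl h2r1) measurableSet_Ioc
  have hI2 : (∫ u in Set.Ioc 0 (2 * r), modCont F' u / u) ≤
      ∫ u in Set.Ioc 0 a, modCont F' u / u := by
    apply int_mono hB hDini (Set.Ioc_subset_Ioc le_rfl h2ra)
      (Set.Ioc_subset_Ioc le_rfl ha1) measurableSet_Ioc
  have hI2nn : 0 ≤ ∫ u in Set.Ioc 0 (2 * r), modCont F' u / u :=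
    int_nonneg hB measurableSet_Ioc (Set.Ioc_subset_Ioc le_rfl h2r1)
  have hωr' : modCont F' r ≤ (Real.log 2)⁻¹ * ∫ u in Set.Ioc 0 (2 * r), modCont F' u / u := by
    rw [← le_div_iff₀ hL2] at hωr
    rw [div_eq_inv_mul] at hωr
    exact hωr
  calc modCont F' r + (Real.log lam)⁻¹ * ∫ u in Set.Ioc 0 r, modCont F' u / u
      ≤ (Real.log 2)⁻¹ * (∫ u in Set.Ioc 0 (2 * r), modCont F' u / u) +
        (Real.log lam)⁻¹ * ∫ u in Set.Ioc 0 (2 * r), modCont F' u / u := by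
        apply add_le_add hωr'
        exact mul_le_mul_of_nonneg_left hImono (by positivity)
    _ = c₀ * ∫ u in Set.Ioc 0 (2 * r), modCont F' u / u := by rw [hc₀]; ring
    _ ≤ c₀ * ∫ u in Set.Ioc 0 a, modCont F' u / u :=
        mul_le_mul_of_nonneg_left hI2 hc₀pos.le
    _ ≤ c₀ * (ε / c₀) := mul_le_mul_of_nonneg_left haint.le hc₀pos.le
    _ = ε := by field_simp

end aux5
set_option maxHeartbeats 4000000 in
/-- a `C¹` Dini expanding circle endomorphism is uniformly
symmetric. -/
theorem stmt_3 (d : ℕ) (hd : 2 ≤ d) (F F' : ℝ → ℝ)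
    (hmono : StrictMono F) (hbij : Function.Bijective F)
    (hdeg : ∀ x : ℝ, F (x + 1) = F x + d) (hF0 : F 0 = 0)
    (hderiv : ∀ x : ℝ, HasDerivAt F (F' x) x) (hcont : Continuous F')
    (C lam : ℝ) (hC : 0 < C) (hlam : 1 < lam)
    (hexp : ∀ (n : ℕ) (x : ℝ), 1 ≤ n → C * lam ^ n ≤ deriv (F^[n]) x)
    (hDini : MeasureTheory.IntegrableOn (fun t => modCont F' t / t) (Set.Ioc 0 1)) :
    (∃ M : ℝ, 1 ≤ M ∧ ∀ x t : ℝ, 0 < t → ∀ n : ℕ, 1 ≤ n →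
      M⁻¹ ≤ (Finv F n (x + t) - Finv F n x) / (Finv F n x - Finv F n (x - t)) ∧
        (Finv F n (x + t) - Finv F n x) / (Finv F n x - Finv F n (x - t)) ≤ M) ∧
    (∀ η : ℝ, 0 < η → ∃ δ : ℝ, 0 < δ ∧ ∀ x t : ℝ, 0 < t → t ≤ δ → ∀ n : ℕ, 1 ≤ n →
      (1 + η)⁻¹ ≤ (Finv F n (x + t) - Finv F n x) / (Finv F n x - Finv F n (x - t)) ∧
        (Finv F n (x + t) - Finv F n x) / (Finv F n x - Finv F n (x - t)) ≤ 1 + η) := by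
  have hlam0 : (0:ℝ) < lam := lt_trans one_pos hlam
  have hm : 0 < C * lam := mul_pos hC hlam0
  obtain ⟨B, hB'⟩ := fprime_bound hdeg hderiv hcont
  have hf' : ∀ x, C * lam ≤ F' x := fprime_lb hderiv hexp
  have hfpos : ∀ x, 0 < F' x := fun x => lt_of_lt_of_le hm (hf' x)
  have hB : ∀ x, |F' x| ≤ B := fun x => by
    rw [abs_of_pos (hfpos x)]; exact hB' x
  have hB0 : 0 < B := lt_of_lt_of_le (hfpos 0) (hB' 0)
  have hd1 : (1:ℝ) < (d:ℝ) := by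
    have h2d : (2:ℝ) ≤ (d:ℝ) := by exact_mod_cast hd
    linarith
  have hd0 : (0:ℝ) < (d:ℝ) := lt_trans one_pos hd1
  have hΨ1nn : 0 ≤ modCont F' 1 +
      (Real.log lam)⁻¹ * ∫ u in Set.Ioc 0 1, modCont F' u / u := by
    have h1 : 0 ≤ modCont F' 1 := omega_nonneg hB one_pos.le
    have h2 : 0 ≤ ∫ u in Set.Ioc 0 1, modCont F' u / u :=
      int_nonneg hB measurableSet_Ioc (fun x h => h)
    have h3 : 0 ≤ (Real.log lam)⁻¹ := inv_nonneg.2 (Real.log_pos hlam).le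
    positivity
  obtain ⟨J, hJ⟩ := pow_unbounded_of_one_lt (2 * (d:ℝ) / C) hlam
  set K : ℝ := 2 * B * J + (modCont F' 1 +
      (Real.log lam)⁻¹ * ∫ u in Set.Ioc 0 1, modCont F' u / u) with hKdef
  have hK0 : 0 ≤ K := by positivity
  set E0 : ℝ := Real.exp (K / (C * lam)) with hE0def
  have hE0_1 : 1 ≤ E0 := Real.one_le_exp (by positivity)
  have hE0pos : 0 < E0 := lt_of_lt_of_le one_pos hE0_1
  set M : ℝ := max 2 ((d:ℝ) * E0) with hMdef
  have hM2 : 2 ≤ M := le_max_left _ _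
  have hMdE : (d:ℝ) * E0 ≤ M := le_max_right _ _
  have hM1 : 1 ≤ M := le_trans one_le_two hM2
  have hM0 : 0 < M := lt_of_lt_of_le one_pos hM1
  have hE0M : E0 ≤ M := by nlinarith [hE0_1, hd1, hMdE]
  have hSig : ∀ k : ℕ,
      (∑ i ∈ Finset.range k, modCont F' (2 * (d:ℝ) / C * lam⁻¹ ^ (i + 1))) ≤ K :=
    fun k => sum2 hB hlam hDini (by positivity) hJ.le k
  -- the main two-sided estimate at scale ≤ 2d
  have main_est : ∀ (k : ℕ) (u p q : ℝ), 0 < p → 0 < q → p + q ≤ 2 * (d:ℝ) →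
      ((Finv F k (u + p) - Finv F k u) / (Finv F k u - Finv F k (u - q)) ≤ (p / q) * E0 ∧
       (p / q) * E0⁻¹ ≤ (Finv F k (u + p) - Finv F k u) / (Finv F k u - Finv F k (u - q))) := by
    intro k u p q hp hq hpq
    obtain ⟨h1, h2⟩ := core_est (s := 2 * (d:ℝ)) hmono hbij hderiv hC hlam hexp hB hp hq hpq
    set E := Real.exp ((∑ i ∈ Finset.range k,
      modCont F' (2 * (d:ℝ) / C * lam⁻¹ ^ (i + 1))) / (C * lam)) with hEdef
    have hE : 0 < E := Real.exp_pos _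
    have hEE0 : E ≤ E0 := by
      rw [hEdef, hE0def]
      exact Real.exp_le_exp.2 ((div_le_div_iff_of_pos_right hm).2 (hSig k))
    have hD : 0 < Finv F k u - Finv F k (u - q) :=
      sub_pos.2 (finv_lt hmono hbij (by linarith))
    have hN : 0 < Finv F k (u + p) - Finv F k u :=
      sub_pos.2 (finv_lt hmono hbij (by linarith))
    constructor
    · rw [div_le_iff₀ hD]
      calc Finv F k (u + p) - Finv F k u
          ≤ (Finv F k u - Finv F k (u - q)) * (p / q * E) := h1
        _ ≤ (Finv F k u - Finv F k (u - q)) * (p / q * E0) := by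
            apply mul_le_mul_of_nonneg_left _ hD.le
            exact mul_le_mul_of_nonneg_left hEE0 (by positivity)
        _ = p / q * E0 * (Finv F k u - Finv F k (u - q)) := by ring
    · rw [le_div_iff₀ hD]
      have h3 : (Finv F k u - Finv F k (u - q)) * (p / q * E0⁻¹) ≤
          ((Finv F k (u + p) - Finv F k u) * (q / p * E)) * (p / q * E0⁻¹) :=
        mul_le_mul_of_nonneg_right h2 (by positivity)
      have h4 : ((Finv F k (u + p) - Finv F k u) * (q / p * E)) * (p / q * E0⁻¹) =
          (Finv F k (u + p) - Finv F k u) * (E / E0) := by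
        field_simp
      have h5 : (Finv F k (u + p) - Finv F k u) * (E / E0) ≤
          (Finv F k (u + p) - Finv F k u) * 1 := by
        apply mul_le_mul_of_nonneg_left _ hN.le
        rw [div_le_one hE0pos]
        exact hEE0
      calc p / q * E0⁻¹ * (Finv F k u - Finv F k (u - q))
          = (Finv F k u - Finv F k (u - q)) * (p / q * E0⁻¹) := by ring
        _ ≤ (Finv F k (u + p) - Finv F k u) * (E / E0) := by rw [← h4]; exact h3
        _ ≤ Finv F k (u + p) - Finv F k u := by simpa using h5
  -- translation helper with real casts
  have etrans : ∀ (m : ℕ) (w : ℝ) (q : ℕ),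
      Finv F m (w + (d:ℝ) ^ m * (q:ℝ)) = Finv F m w + q := by
    intro m w q
    have h := finv_add_nat hbij hdeg m q w
    push_cast at h
    exact h
  refine ⟨⟨M, hM1, ?_⟩, ?_⟩
  · -- Part 1: uniform bound
    intro x t ht n hn
    have hD : 0 < Finv F n x - Finv F n (x - t) :=
      sub_pos.2 (finv_lt hmono hbij (by linarith))
    have hN : 0 < Finv F n (x + t) - Finv F n x :=
      sub_pos.2 (finv_lt hmono hbij (by linarith))
    rcases le_or_gt t (d:ℝ) with htd | htd
    · -- small t ≤ d
      obtain ⟨hup, hdown⟩ := main_est n x t t ht ht (by linarith)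
      have htt : t / t = 1 := div_self ht.ne'
      rw [htt, one_mul] at hup hdown
      constructor
      · refine le_trans ?_ hdown
        exact inv_anti₀ hE0pos hE0M
      · exact le_trans hup hE0M
    · rcases lt_or_ge t ((d:ℝ) ^ n) with htn | htn
      · -- medium case: d < t < d^n
        have ht1 : (1:ℝ) ≤ t := le_trans hd1.le htd.le
        set m' := Nat.log d ⌊t⌋₊ with hm'def
        have hfl1 : 1 ≤ ⌊t⌋₊ := Nat.le_floor (by exact_mod_cast ht1)
        have hdm : (d:ℝ) ^ m' ≤ t := by
          have h1 : (d:ℕ) ^ m' ≤ ⌊t⌋₊ := Nat.pow_log_le_self d (by omega)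
          calc (d:ℝ) ^ m' = ((d ^ m' : ℕ) : ℝ) := by push_cast; ring
            _ ≤ (⌊t⌋₊ : ℝ) := by exact_mod_cast h1
            _ ≤ t := Nat.floor_le (by linarith)
        have hdm1 : t < (d:ℝ) ^ (m' + 1) := by
          have h1 : ⌊t⌋₊ < d ^ (m' + 1) := Nat.lt_pow_succ_log_self (by omega) ⌊t⌋₊
          have h2 : (⌊t⌋₊ : ℕ) + 1 ≤ d ^ (m' + 1) := h1
          have h3 : t < (⌊t⌋₊ : ℝ) + 1 := Nat.lt_floor_add_one t
          calc t < (⌊t⌋₊ : ℝ) + 1 := h3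
            _ ≤ ((d ^ (m' + 1) : ℕ) : ℝ) := by exact_mod_cast h2
            _ = (d:ℝ) ^ (m' + 1) := by push_cast; ring
        have hm'n : m' < n := by
          by_contra hcon
          push_neg at hcon
          have : (d:ℝ) ^ n ≤ (d:ℝ) ^ m' := pow_le_pow_right₀ hd1.le hcon
          linarith
        set k := n - m' with hkdef
        have hmk : n = m' + k := by omega
        set u := Finv F m' x with hudef
        set p := Finv F m' (x + t) - u with hpdef
        set q := u - Finv F m' (x - t) with hqdef
        have hadd1 : Finv F m' (x + (d:ℝ) ^ m') = u + 1 := by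
          have h := etrans m' x 1
          simpa using h
        have haddd : Finv F m' (x + (d:ℝ) ^ (m' + 1)) = u + d := by
          have h := etrans m' x d
          rw [pow_succ]
          exact h
        have hsub1 : Finv F m' (x - (d:ℝ) ^ m') = u - 1 := by
          have h := etrans m' (x - (d:ℝ) ^ m') 1
          rw [show x - (d:ℝ) ^ m' + (d:ℝ) ^ m' * ((1:ℕ):ℝ) = x from by push_cast; ring] at h
          rw [← hudef] at h
          push_cast at h
          linarith [h]
        have hsubd : Finv F m' (x - (d:ℝ) ^ (m' + 1)) = u - d := by
          have h := etrans m' (x - (d:ℝ) ^ (m' + 1)) d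
          rw [show x - (d:ℝ) ^ (m' + 1) + (d:ℝ) ^ m' * ((d:ℕ):ℝ) = x from by
            push_cast; rw [pow_succ]; ring] at h
          rw [← hudef] at h
          linarith [h]
        have hp1 : 1 ≤ p := by
          have h := finv_le hmono hbij (n := m') (show x + (d:ℝ) ^ m' ≤ x + t by linarith)
          rw [hadd1] at h
          rw [hpdef]; linarith
        have hpd : p ≤ d := by
          have h := finv_le hmono hbij (n := m') (show x + t ≤ x + (d:ℝ) ^ (m' + 1) by linarith)
          rw [haddd] at h
          rw [hpdef]; linarith
        have hq1 : 1 ≤ q := by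
          have h := finv_le hmono hbij (n := m') (show x - t ≤ x - (d:ℝ) ^ m' by linarith)
          rw [hsub1] at h
          rw [hqdef]; linarith
        have hqd : q ≤ d := by
          have h := finv_le hmono hbij (n := m') (show x - (d:ℝ) ^ (m' + 1) ≤ x - t by linarith)
          rw [hsubd] at h
          rw [hqdef]; linarith
        have e1 : Finv F n (x + t) = Finv F k (u + p) := by
          rw [show u + p = Finv F m' (x + t) from by rw [hpdef]; ring]
          rw [hmk]
          exact finv_comp hbij m' k (x + t)
        have e2 : Finv F n x = Finv F k u := by
          rw [hudef, hmk]
          exact finv_comp hbij m' k x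
        have e3 : Finv F n (x - t) = Finv F k (u - q) := by
          rw [show u - q = Finv F m' (x - t) from by rw [hqdef]; ring]
          rw [hmk]
          exact finv_comp hbij m' k (x - t)
        rw [e1, e2, e3]
        obtain ⟨hup, hdown⟩ := main_est k u p q (by linarith) (by linarith) (by linarith)
        have hpq_ub : p / q ≤ (d:ℝ) := by
          rw [div_le_iff₀ (by linarith : (0:ℝ) < q)]
          nlinarith
        have hpq_lb : 1 / (d:ℝ) ≤ p / q := by
          rw [div_le_div_iff₀ hd0 (by linarith : (0:ℝ) < q)]
          nlinarith
        constructor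
        · refine le_trans ?_ hdown
          have hstep : M⁻¹ ≤ ((d:ℝ) * E0)⁻¹ := inv_anti₀ (by positivity) hMdE
          calc M⁻¹ ≤ ((d:ℝ) * E0)⁻¹ := hstep
            _ = (1 / (d:ℝ)) * E0⁻¹ := by rw [mul_inv]; ring
            _ ≤ (p / q) * E0⁻¹ := by
                apply mul_le_mul_of_nonneg_right hpq_lb (by positivity)
        · refine le_trans hup ?_
          calc (p / q) * E0 ≤ (d:ℝ) * E0 :=
              mul_le_mul_of_nonneg_right hpq_ub hE0pos.le
            _ ≤ M := hMdE
      · -- large case : d^n ≤ t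
        have hdn0 : (0:ℝ) < (d:ℝ) ^ n := pow_pos hd0 n
        set m₀ := ⌊t / (d:ℝ) ^ n⌋₊ with hm₀def
        have hm₀1 : (1:ℝ) ≤ (m₀:ℝ) := by
          have h : 1 ≤ m₀ := Nat.le_floor (by
            rw [le_div_iff₀ hdn0]; push_cast; linarith)
          exact_mod_cast h
        have hm₀t : (m₀:ℝ) * (d:ℝ) ^ n ≤ t := by
          have h := Nat.floor_le (show 0 ≤ t / (d:ℝ) ^ n by positivity)
          rw [← le_div_iff₀ hdn0]
          exact h
        have hm₀t2 : t < ((m₀:ℝ) + 1) * (d:ℝ) ^ n := by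
          have h := Nat.lt_floor_add_one (t / (d:ℝ) ^ n)
          rw [div_lt_iff₀ hdn0] at h
          exact h
        have hNa : (m₀:ℝ) ≤ Finv F n (x + t) - Finv F n x := by
          have h := finv_le hmono hbij (n := n) (show x + (d:ℝ) ^ n * (m₀:ℝ) ≤ x + t by nlinarith)
          rw [etrans n x m₀] at h
          linarith
        have hNb : Finv F n (x + t) - Finv F n x ≤ (m₀:ℝ) + 1 := by
          have h := finv_le hmono hbij (n := n)
            (show x + t ≤ x + (d:ℝ) ^ n * ((m₀ + 1 : ℕ):ℝ) by push_cast; nlinarith)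
          rw [etrans n x (m₀ + 1)] at h
          push_cast at h
          linarith
        have hDa : (m₀:ℝ) ≤ Finv F n x - Finv F n (x - t) := by
          have h := finv_le hmono hbij (n := n)
            (show x - t ≤ x - (d:ℝ) ^ n * (m₀:ℝ) by nlinarith)
          have h2 := etrans n (x - (d:ℝ) ^ n * (m₀:ℝ)) m₀
          rw [show x - (d:ℝ) ^ n * (m₀:ℝ) + (d:ℝ) ^ n * (m₀:ℝ) = x from by ring] at h2
          linarith
        have hDb : Finv F n x - Finv F n (x - t) ≤ (m₀:ℝ) + 1 := by
          have h := finv_le hmono hbij (n := n)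
            (show x - (d:ℝ) ^ n * ((m₀ + 1 : ℕ):ℝ) ≤ x - t by push_cast; nlinarith)
          have h2 := etrans n (x - (d:ℝ) ^ n * ((m₀ + 1 : ℕ):ℝ)) (m₀ + 1)
          rw [show x - (d:ℝ) ^ n * ((m₀ + 1:ℕ):ℝ) + (d:ℝ) ^ n * ((m₀ + 1:ℕ):ℝ) = x from by
            ring] at h2
          push_cast at h2
          push_cast at h
          linarith
        constructor
        · rw [le_div_iff₀ hD]
          have hMinv : M⁻¹ ≤ 1 / 2 := by
            rw [inv_le_comm₀ (by positivity) (by norm_num)]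
            simpa using hM2
          have hstep : M⁻¹ * (Finv F n x - Finv F n (x - t)) ≤
              (1 / 2) * (Finv F n x - Finv F n (x - t)) :=
            mul_le_mul_of_nonneg_right hMinv hD.le
          nlinarith [hstep, hDb, hNa, hm₀1]
        · rw [div_le_iff₀ hD]
          have hstep : 0 ≤ (M - 2) * (Finv F n x - Finv F n (x - t)) :=
            mul_nonneg (by linarith) hD.le
          nlinarith [hNb, hDa, hm₀1, hstep]
  · -- Part 2: small scales
    intro η hη
    have h1η : (0:ℝ) < 1 + η := by linarith
    have hlogη : 0 < Real.log (1 + η) := Real.log_pos (by linarith)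
    obtain ⟨r₀, hr₀0, hr₀1, hr₀⟩ := psi_small hB hlam hDini
      (show 0 < (C * lam) * Real.log (1 + η) by positivity)
    refine ⟨C * r₀ / 2, by positivity, ?_⟩
    intro x t ht htδ n hn
    have hr : 0 < 2 * t / C := by positivity
    have hrr₀ : 2 * t / C ≤ r₀ := by
      rw [div_le_iff₀ hC]; nlinarith
    have hSig2 : (∑ i ∈ Finset.range n, modCont F' (2 * t / C * lam⁻¹ ^ (i + 1))) ≤
        (C * lam) * Real.log (1 + η) := by
      have h1 := sum1 hB hlam hDini hr (le_trans hrr₀ hr₀1) n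
      have h2 := hr₀ (2 * t / C) hr hrr₀
      linarith
    obtain ⟨h1, h2⟩ := core_est (s := 2 * t) hmono hbij hderiv hC hlam hexp hB
      (k := n) (u := x) ht ht (by linarith)
    set E := Real.exp ((∑ i ∈ Finset.range n,
      modCont F' (2 * t / C * lam⁻¹ ^ (i + 1))) / (C * lam)) with hEdef
    have hEpos : 0 < E := Real.exp_pos _
    have hE1η : E ≤ 1 + η := by
      rw [hEdef]
      calc Real.exp ((∑ i ∈ Finset.range n,
            modCont F' (2 * t / C * lam⁻¹ ^ (i + 1))) / (C * lam))
          ≤ Real.exp (((C * lam) * Real.log (1 + η)) / (C * lam)) :=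
            Real.exp_le_exp.2 ((div_le_div_iff_of_pos_right hm).2 hSig2)
        _ = 1 + η := by
            rw [mul_div_cancel_left₀ _ hm.ne', Real.exp_log h1η]
    have hD : 0 < Finv F n x - Finv F n (x - t) :=
      sub_pos.2 (finv_lt hmono hbij (show x - t < x by linarith))
    have hN : 0 < Finv F n (x + t) - Finv F n x :=
      sub_pos.2 (finv_lt hmono hbij (show x < x + t by linarith))
    have htt : t / t = 1 := div_self ht.ne'
    rw [htt, one_mul] at h1 h2
    constructor
    · rw [le_div_iff₀ hD]
      have h3 : Finv F n x - Finv F n (x - t) ≤ (Finv F n (x + t) - Finv F n x) * (1 + η) := by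
        calc Finv F n x - Finv F n (x - t) ≤ (Finv F n (x + t) - Finv F n x) * E := h2
          _ ≤ (Finv F n (x + t) - Finv F n x) * (1 + η) :=
            mul_le_mul_of_nonneg_left hE1η hN.le
      rw [inv_mul_le_iff₀ h1η]
      linarith [h3]
    · rw [div_le_iff₀ hD]
      calc Finv F n (x + t) - Finv F n x ≤ (Finv F n x - Finv F n (x - t)) * E := h1
        _ ≤ (Finv F n x - Finv F n (x - t)) * (1 + η) :=
          mul_le_mul_of_nonneg_left hE1η hD.le
        _ = (1 + η) * (Finv F n x - Finv F n (x - t)) := by ring
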